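/- Let μ ∈ (0,1) and α, β ∈ ℝ satisfy 0 ≤ α ≤ (1-μ)/(3+μ), β ≤ 0, and (1/2)[α(1+μ) - ((1-μ)(1-α)²)/(1+α)] < β. Then (1+α)(α-β) - ((1-μ)/(1+μ))(α² - 2α + βα + β + 1) < 0. -/

import Mathlib

theorem coefficient_k1_negative
    (μ α β : ℝ) (hμ : μ ∈ Set.Ioo (0 : ℝ) 1)
    (hα0 : 0 ≤ α) (hα1 : α ≤ (1 - μ) / (3 + μ))
    (hβ0 : β ≤ 0)
    (hβ : (1 / 2) * (α * (1 + μ) - ((1 - μ) * (1 - α) ^ 2) / (1 + α)) < β) :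
    (1 + α) * (α - β) - ((1 - μ) / (1 + μ)) * (α ^ 2 - 2 * α + β * α + β + 1) < 0 := by
  obtain ⟨hμ0, hμ1⟩ := hμ
  have h1 : (0:ℝ) < 1 + α := by linarith
  have h2 : (0:ℝ) < 1 + μ := by linarith
  have hβ' : α * (1 + μ) * (1 + α) - (1 - μ) * (1 - α) ^ 2 < 2 * β * (1 + α) := by
    have := mul_lt_mul_of_pos_right hβ h1
    field_simp at this
    nlinarith [this]
  rw [sub_neg, div_mul_eq_mul_div, lt_div_iff₀ h2]
  nlinarith [hβ']
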